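/- Let Δ be a countable homogeneous structure in a finite relational language, let c_1,…,c_n be elements of Δ, and let f, g be m-ary operations on the domain of Δ, both canonical on (Δ,c_1,…,c_n), with identical type functions, i.e., for every k and every tuple a^1,…,a^k ∈ Δ^m the tuples (f(a^1),…,f(a^k)) and (g(a^1),…,g(a^k)) have the same type in (Δ,c_1,…,c_n). Then for every function clone C on the domain of Δ that contains every automorphism of Δ and whose arity-wise parts are closed in the topology of pointwise convergence, f ∈ C if and only if g ∈ C. -/

import Mathlib

/-!
Two canonical functions with identical type functions belong to the same topologically
closed function clones containing the automorphism group.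
-/

open FirstOrder FirstOrder.Language FirstOrder.Language.Structure

/-- The tuples `a` and `b` have the same type in the expansion `(M, c₁, …, cₙ)` of `M` by the
constants `c = (c₁, …, cₙ)`: equivalently, the concatenated tuples `(a, c)` and `(b, c)`
satisfy the same first-order `L`-formulas in `M`. -/
def SameTypeOver (L : Language) {M : Type} [L.Structure M] {k n : ℕ}
    (c : Fin n → M) (a b : Fin k → M) : Prop :=
  ∀ φ : L.Formula (Fin k ⊕ Fin n), φ.Realize (Sum.elim a c) ↔ φ.Realize (Sum.elim b c)

/-- The `m`-ary operation `g` on `M` is canonical as a function on the expansion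
`(M, c₁, …, cₙ)`: it sends tuples of equal type (computed coordinatewise in the power) to
tuples of equal type. -/
def CanonicalOn (L : Language) {M : Type} [L.Structure M] {m n : ℕ}
    (c : Fin n → M) (g : (Fin m → M) → M) : Prop :=
  ∀ (k : ℕ) (a b : Fin k → Fin m → M),
    (∀ i : Fin m, SameTypeOver L c (fun j => a j i) (fun j => b j i)) →
    SameTypeOver L c (fun j => g (a j)) (fun j => g (b j))

/-- A function clone on `D`: an arity-indexed family of sets of finitary operations on `D`
(the index `n` corresponding to the `(n+1)`-ary operations, so that all arities are `≥ 1`)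
containing all projections and closed under composition. -/
def IsClone {D : Type} (C : ∀ n : ℕ, Set ((Fin (n + 1) → D) → D)) : Prop :=
  (∀ (n : ℕ) (k : Fin (n + 1)), (fun v => v k) ∈ C n) ∧
  (∀ (n m : ℕ) (f : (Fin (n + 1) → D) → D) (g : Fin (n + 1) → (Fin (m + 1) → D) → D),
    f ∈ C n → (∀ i, g i ∈ C m) → (fun v => f fun i => g i v) ∈ C m)


/-- In a relational ultrahomogeneous structure, two finite tuples realizing the same
formulas are connected by an automorphism. -/
lemma exists_aut_of_sameType {L : Language} [L.IsRelational] {M : Type} [L.Structure M]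
    (hhom : L.IsUltrahomogeneous M) {ι : Type} [Finite ι] (u v : ι → M)
    (h : ∀ φ : L.Formula ι, φ.Realize u ↔ φ.Realize v) :
    ∃ e : M ≃[L] M, ∀ i, e (u i) = v i := by
  have eqiff : ∀ i j : ι, u i = u j ↔ v i = v j := by
    intro i j
    simpa using h (Term.equal (Term.var i) (Term.var j))
  have reliff : ∀ (l : ℕ) (r : L.Relations l) (t : Fin l → ι),
      RelMap r (u ∘ t) ↔ RelMap r (v ∘ t) := by
    intro l r t
    simpa [Function.comp_def] using h (r.formula fun i => Term.var (t i))
  set S := Substructure.closure L (Set.range u) with hS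
  have hmem : ∀ i, u i ∈ S := fun i => Substructure.subset_closure ⟨i, rfl⟩
  have hval : ∀ x : S, ∃ i, u i = (x : M) := by
    intro x
    exact (Substructure.mem_closure_iff_of_isRelational L (Set.range u) (x : M)).1 x.2
  classical
  let c : S → ι := fun x => (hval x).choose
  have hc : ∀ x : S, u (c x) = (x : M) := fun x => (hval x).choose_spec
  let F : S ↪[L] M :=
    { toFun := fun x => v (c x)
      inj' := by
        intro x y hxy
        exact Subtype.ext (by rw [← hc x, ← hc y, eqiff]; exact hxy)
      map_fun' := fun {l} f => isEmptyElim f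
      map_rel' := by
        intro l r x
        have h1 : (fun i => ((x i : M))) = u ∘ fun i => c (x i) :=
          funext fun i => (hc (x i)).symm
        have h2 : RelMap r x ↔ RelMap r (fun i => ((x i : M))) := Iff.rfl
        rw [h2, h1]
        exact (reliff l r fun i => c (x i)).symm }
  obtain ⟨e, he⟩ := hhom S (Substructure.fg_closure (Set.finite_range u)) F
  refine ⟨e, fun i => ?_⟩
  have : F ⟨u i, hmem i⟩ = e (u i) := by
    rw [he]; rfl
  rw [← this]
  show v (c ⟨u i, hmem i⟩) = v i
  rw [← eqiff]
  exact hc _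

lemma key_mem {L : Language} [L.IsRelational] {M : Type} [L.Structure M]
    [TopologicalSpace M] [DiscreteTopology M]
    (hhom : L.IsUltrahomogeneous M) {n : ℕ} {c : Fin n → M} {m : ℕ}
    {f g : (Fin (m + 1) → M) → M}
    (hsame : ∀ (k : ℕ) (a : Fin k → Fin (m + 1) → M),
      SameTypeOver L c (fun j => f (a j)) (fun j => g (a j)))
    (C : ∀ i : ℕ, Set ((Fin (i + 1) → M) → M))
    (hclone : IsClone C) (hclosed : ∀ i, IsClosed (C i))
    (haut : ∀ e : M ≃[L] M, (fun v : Fin 1 → M => e (v 0)) ∈ C 0)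
    (hfC : f ∈ C m) : g ∈ C m := by
  rw [← (hclosed m).closure_eq]
  rw [mem_closure_iff_nhds]
  intro U hU
  rw [nhds_pi] at hU
  obtain ⟨I, hIfin, t, ht, hsub⟩ := Filter.mem_pi.1 hU
  obtain ⟨k, a, ha⟩ := hIfin.fin_embedding
  obtain ⟨e, he⟩ := exists_aut_of_sameType hhom
    (Sum.elim (fun j => f (a j)) c) (Sum.elim (fun j => g (a j)) c) (hsame k a)
  refine ⟨fun w => e (f w), ?_, ?_⟩
  · apply hsub
    intro x hx
    rw [← ha] at hx
    obtain ⟨j, rfl⟩ := hx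
    show e (f (a j)) ∈ t (a j)
    have h1 : e (f (a j)) = g (a j) := he (Sum.inl j)
    rw [h1]
    exact mem_of_mem_nhds (ht (a j))
  · exact hclone.2 0 m (fun v => e (v 0)) (fun _ => f) (haut e) (fun _ => hfC)

/-- Let `Δ = M` be a countable homogeneous structure in a finite relational language, let
`c₁, …, cₙ ∈ M`, and let `f`, `g` be operations of the same arity on `M`, both canonical on
`(Δ, c₁, …, cₙ)`, with identical type functions (for every finite tuple of arguments, the
image tuples under `f` and under `g` have the same type in `(Δ, c₁, …, cₙ)`). Then for every
function clone `C` on `M` containing every automorphism of `Δ` and whose arity-wise parts are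
closed in the topology of pointwise convergence, `f ∈ C` iff `g ∈ C`. -/
theorem statement14 (L : Language) [L.IsRelational] [Finite (Σ i, L.Relations i)]
    (M : Type) [L.Structure M] [Countable M]
    [TopologicalSpace M] [DiscreteTopology M]
    (hhom : L.IsUltrahomogeneous M)
    (n : ℕ) (c : Fin n → M) (m : ℕ)
    (f g : (Fin (m + 1) → M) → M)
    (hf : CanonicalOn L c f) (hg : CanonicalOn L c g)
    (hsame : ∀ (k : ℕ) (a : Fin k → Fin (m + 1) → M),
      SameTypeOver L c (fun j => f (a j)) (fun j => g (a j)))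
    (C : ∀ i : ℕ, Set ((Fin (i + 1) → M) → M))
    (hclone : IsClone C) (hclosed : ∀ i, IsClosed (C i))
    (haut : ∀ e : M ≃[L] M, (fun v : Fin 1 → M => e (v 0)) ∈ C 0) :
    f ∈ C m ↔ g ∈ C m :=
  ⟨key_mem hhom hsame C hclone hclosed haut,
   key_mem hhom (fun k a φ => (hsame k a φ).symm) C hclone hclosed haut⟩
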